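/- Removing the smallest-probability element from a finite probability distribution and renormalizing strictly decreases the Shannon entropy. Precisely: let p : Fin n → ℝ (n ≥ 2) be a probability vector with all p i > 0, sorted so that p i ≥ p j whenever i ≤ j, and with p (n-1) strictly smaller than every other entry. Define q i = p i / (1 - p (n-1)) for i < n-1. Then H(q) < H(p), where H(p) = -∑ p i * log (p i). -/

import Mathlib

open Finset Real

/-- Shannon entropy of a finite distribution (natural log, `0 log 0 = 0`
since `Real.log 0 = 0`). -/
noncomputable def shannonEntropy {n : ℕ} (p : Fin n → ℝ) : ℝ :=
  -∑ i, p i * Real.log (p i)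

/-- Removing the smallest-probability element of a probability vector and
renormalizing strictly decreases Shannon entropy. -/
theorem entropy_remove_smallest {n : ℕ} (hn : 2 ≤ n) (p : Fin n → ℝ)
    (last : Fin n) (hlast : (last : ℕ) = n - 1)
    (hpos : ∀ i, 0 < p i) (hsum : ∑ i, p i = 1)
    (hsorted : ∀ i j : Fin n, i ≤ j → p j ≤ p i)
    (hmin : ∀ i : Fin n, i ≠ last → p last < p i)
    (q : Fin n → ℝ)
    (hq : ∀ i : Fin n, q i = if i = last then 0 else p i / (1 - p last)) :
    shannonEntropy q < shannonEntropy p := by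
  set t := p last with ht
  have ht0 : 0 < t := hpos last
  set i0 : Fin n := ⟨0, by omega⟩ with hi0def
  have hi0 : i0 ≠ last := by
    intro h
    have : (i0 : ℕ) = (last : ℕ) := by rw [h]
    simp [hi0def, hlast] at this
    omega
  have hS : ∑ i ∈ Finset.univ.erase last, p i = 1 - t := by
    rw [Finset.sum_erase_eq_sub (Finset.mem_univ last), hsum]
  have hSpos : 0 < ∑ i ∈ Finset.univ.erase last, p i :=
    Finset.sum_pos (fun i _ => hpos i) ⟨i0, Finset.mem_erase.2 ⟨hi0, Finset.mem_univ _⟩⟩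
  set c : ℝ := 1 - t with hcdef
  have hc : 0 < c := hS ▸ hSpos
  have tle : ∀ i, t ≤ p i := by
    intro i
    exact hsorted i last (by rw [Fin.le_def, hlast]; omega)
  have hB : ∑ i ∈ Finset.univ.erase last, p i * Real.log (p i)
      = (∑ i, p i * Real.log (p i)) - t * Real.log t := by
    rw [Finset.sum_erase_eq_sub (Finset.mem_univ last)]
  have hq' : ∀ i ∈ Finset.univ.erase last, q i * Real.log (q i)
      = p i * Real.log (p i) / c - p i * (Real.log c / c) := by
    intro i hi
    have hne : i ≠ last := (Finset.mem_erase.1 hi).1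
    rw [hq i, if_neg hne, Real.log_div (ne_of_gt (hpos i)) (ne_of_gt hc)]
    field_simp
  have hSq : ∑ i, q i * Real.log (q i)
      = ((∑ i, p i * Real.log (p i)) - t * Real.log t) / c - Real.log c := by
    rw [← Finset.sum_erase_add Finset.univ _ (Finset.mem_univ last), hq last, if_pos rfl]
    rw [Finset.sum_congr rfl hq', Finset.sum_sub_distrib, ← Finset.sum_div, hB,
      ← Finset.sum_mul, hS]
    field_simp
    simp
  have hkey : Real.log t < ∑ i, p i * Real.log (p i) := by
    have h1 : ∑ i, p i * Real.log t = Real.log t := by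
      rw [← Finset.sum_mul, hsum, one_mul]
    have h2 : ∑ i, p i * Real.log t < ∑ i, p i * Real.log (p i) := by
      apply Finset.sum_lt_sum
      · intro i _
        exact mul_le_mul_of_nonneg_left (Real.log_le_log ht0 (tle i)) (le_of_lt (hpos i))
      · exact ⟨i0, Finset.mem_univ _,
          mul_lt_mul_of_pos_left (Real.log_lt_log ht0 (hmin i0 hi0)) (hpos i0)⟩
    linarith
  have hlogc : Real.log c < 0 := Real.log_neg hc (by rw [hcdef]; linarith)
  unfold shannonEntropy
  rw [hSq]
  set B := ∑ i, p i * Real.log (p i) with hBdef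
  rw [neg_lt_neg_iff, lt_sub_iff_add_lt, lt_div_iff₀ hc]
  have hc' : c = 1 - t := rfl
  have h3 : Real.log c * (1 - t) < 0 :=
    mul_neg_of_neg_of_pos hlogc (by rw [← hc']; exact hc)
  have h4 : 0 < t * (B - Real.log t) := mul_pos ht0 (sub_pos.2 hkey)
  rw [hc']
  nlinarith [h3, h4]
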